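/- Let X be a finite simple graph on n vertices. Then ϑ⁻(X)·ϑ̄⁺(X) ≥ n, where ϑ⁻(X) is the supremum of ∑_{x,x'} M_{x,x'} over doubly nonnegative matrices M indexed by V(X) with tr(M) = 1 and M_{x,x'} = 0 whenever x is adjacent to x', and ϑ̄⁺(X) is the infimum of t ∈ ℝ such that there exists a doubly nonnegative matrix N indexed by V(X) with N_{x,x} = t for all x, N_{x,x'} = 0 whenever x is adjacent to x', and N − J positive semidefinite (J the all-ones matrix). Moreover, if X is vertex-transitive then ϑ⁻(X)·ϑ̄⁺(X) = n. -/

import Mathlib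

open Matrix

/-- A real matrix is completely positive if it equals `Pᵀ * P`
for some entrywise nonnegative real matrix `P`. -/
def IsCP {ι : Type*} (H : Matrix ι ι ℝ) : Prop :=
  ∃ (n : ℕ) (P : Matrix (Fin n) ι ℝ), (∀ i j, 0 ≤ P i j) ∧ H = Pᵀ * P

/-- A real matrix indexed by `ι` is completely positive semidefinite if it is the Gram
matrix of real positive semidefinite `d × d` matrices for some `d ≥ 1`. -/
def IsCPSD {ι : Type*} (H : Matrix ι ι ℝ) : Prop :=
  ∃ d : ℕ, 0 < d ∧ ∃ ρ : ι → Matrix (Fin d) (Fin d) ℝ,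
    (∀ i, (ρ i).PosSemidef) ∧ ∀ i j, H i j = (ρ i * ρ j).trace

/-- A real matrix is doubly nonnegative if it is positive semidefinite
and entrywise nonnegative. -/
def IsDNN {ι : Type*} [Fintype ι] (H : Matrix ι ι ℝ) : Prop :=
  H.PosSemidef ∧ ∀ i j, 0 ≤ H i j

/-- Schrijver's theta `ϑ⁻(Z)`: optimize over doubly nonnegative matrices. -/
noncomputable def thetaMinus {γ : Type*} [Fintype γ] (Z : SimpleGraph γ) : ℝ :=
  sSup {r : ℝ | ∃ M : Matrix γ γ ℝ, IsDNN M ∧ M.trace = 1 ∧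
    (∀ z z', Z.Adj z z' → M z z' = 0) ∧ r = ∑ z, ∑ z', M z z'}

/-- Szegedy's theta of the complement, `ϑ̄⁺(Z) = Θ^{DNN}(Z)`. -/
noncomputable def thetaBarPlus {γ : Type*} [Fintype γ] (Z : SimpleGraph γ) : ℝ :=
  sInf {t : ℝ | ∃ N : Matrix γ γ ℝ, IsDNN N ∧ (∀ z, N z z = t) ∧
    (∀ z z', Z.Adj z z' → N z z' = 0) ∧
    (N - Matrix.of fun _ _ => (1 : ℝ)).PosSemidef}


namespace Stmt8Aux
variable {γ : Type*} [Fintype γ]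

lemma psd_smul {c : ℝ} (hc : 0 ≤ c) {M : Matrix γ γ ℝ} (hM : M.PosSemidef) :
    (c • M).PosSemidef := by
  refine Matrix.PosSemidef.of_dotProduct_mulVec_nonneg ?_ fun x => ?_
  · unfold Matrix.IsHermitian
    rw [conjTranspose_smul, star_trivial, hM.1.eq]
  · rw [smul_mulVec, dotProduct_smul, smul_eq_mul]
    exact mul_nonneg hc (hM.dotProduct_mulVec_nonneg x)

lemma psd_sum {ι : Type*} (s : Finset ι) (f : ι → Matrix γ γ ℝ)
    (h : ∀ i ∈ s, (f i).PosSemidef) : (∑ i ∈ s, f i).PosSemidef := by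
  classical
  induction s using Finset.induction_on with
  | empty => simpa using Matrix.PosSemidef.zero
  | @insert a s hni ih =>
    rw [Finset.sum_insert hni]
    exact (h _ (Finset.mem_insert_self _ _)).add
      (ih fun i hi => h i (Finset.mem_insert_of_mem hi))


section
variable [DecidableEq γ]
lemma psd_diag_nonneg {M : Matrix γ γ ℝ} (hM : M.PosSemidef) (i : γ) : 0 ≤ M i i := by
  simpa using hM.dotProduct_mulVec_nonneg (Pi.single i 1)

lemma psd_pair {M : Matrix γ γ ℝ} (hM : M.PosSemidef) (i j : γ) :
    M i j + M j i ≤ M i i + M j j := by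
  have h := hM.dotProduct_mulVec_nonneg (Pi.single i 1 - Pi.single j 1)
  simp [dotProduct, mulVec, Pi.single_apply, sub_mul, mul_sub,
    Finset.sum_sub_distrib, Finset.mul_sum] at h
  linarith

lemma nI_sub_J_psd : (((Fintype.card γ : ℝ)) • (1 : Matrix γ γ ℝ)
    - Matrix.of fun _ _ => (1 : ℝ)).PosSemidef := by
  refine Matrix.PosSemidef.of_dotProduct_mulVec_nonneg ?_ ?_
  · unfold Matrix.IsHermitian
    ext a b
    simp [conjTranspose_apply, one_apply, eq_comm]
  · intro x
    have key : (∑ i, x i) ^ 2 ≤ (Fintype.card γ : ℝ) * ∑ i, (x i) ^ 2 := by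
      simpa using sq_sum_le_card_mul_sum_sq (s := Finset.univ) (f := x)
    have h1 : x ⬝ᵥ (((Fintype.card γ : ℝ)) • (1 : Matrix γ γ ℝ)) *ᵥ x
        = (Fintype.card γ : ℝ) * ∑ i, (x i)^2 := by
      rw [smul_mulVec, one_mulVec, dotProduct_smul, smul_eq_mul]
      simp [dotProduct, sq]
    have h2 : x ⬝ᵥ ((Matrix.of fun _ _ => (1:ℝ)) *ᵥ x) = (∑ i, x i)^2 := by
      simp only [dotProduct, mulVec, of_apply, one_mul, sq]
      rw [← Finset.sum_mul]
    rw [star_trivial, sub_mulVec, dotProduct_sub, h1, h2]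
    linarith

end
lemma avg_mem {γ : Type*} [Fintype γ] [Nonempty γ] (X : SimpleGraph γ)
    (hvt : ∀ u v : γ, ∃ φ : X ≃g X, φ u = v)
    {M : Matrix γ γ ℝ} (hdnn : IsDNN M) (htr : M.trace = 1)
    (hedge : ∀ z z', X.Adj z z' → M z z' = 0) {r : ℝ}
    (hr : r = ∑ z, ∑ z', M z z') (hrpos : 0 < r) :
    ∃ N : Matrix γ γ ℝ, IsDNN N ∧ (∀ z, N z z = (Fintype.card γ : ℝ) / r) ∧
      (∀ z z', X.Adj z z' → N z z' = 0) ∧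
      (N - Matrix.of fun _ _ => (1 : ℝ)).PosSemidef := by
  classical
  letI : Fintype (X ≃g X) :=
    Fintype.ofInjective (fun φ => (φ.toEquiv : γ ≃ γ))
      (fun a b h => by cases a; cases b; simpa using h)
  haveI : Nonempty (X ≃g X) := ⟨RelIso.refl _⟩
  set n : ℝ := (Fintype.card γ : ℝ) with hn
  have hnpos : 0 < n := by rw [hn]; exact Nat.cast_pos.mpr Fintype.card_pos
  set k : ℝ := (Fintype.card (X ≃g X) : ℝ) with hk
  have hkpos : 0 < k := by rw [hk]; exact Nat.cast_pos.mpr Fintype.card_pos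
  set B : Matrix γ γ ℝ := (k⁻¹ : ℝ) • ∑ φ : X ≃g X, M.submatrix φ φ with hB
  have hBapp : ∀ a b, B a b = k⁻¹ * ∑ φ : X ≃g X, M (φ a) (φ b) := by
    intro a b
    simp [hB, Matrix.sum_apply]
  have hpsd : B.PosSemidef :=
    psd_smul (inv_nonneg.mpr hkpos.le)
      (psd_sum _ _ fun φ _ => hdnn.1.submatrix _)
  have hnonneg : ∀ a b, 0 ≤ B a b := by
    intro a b
    rw [hBapp]
    exact mul_nonneg (inv_nonneg.mpr hkpos.le)
      (Finset.sum_nonneg fun φ _ => hdnn.2 _ _)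
  have hMsymm : ∀ a b, M a b = M b a := by
    intro a b
    have h := congrFun (congrFun hdnn.1.1 a) b
    simpa [conjTranspose_apply] using h.symm
  have hsymm : ∀ a b, B a b = B b a := by
    intro a b
    rw [hBapp, hBapp]
    exact congrArg _ (Finset.sum_congr rfl fun φ _ => hMsymm _ _)
  -- key invariance
  have const : ∀ (h : γ → ℝ) (u v : γ),
      ∑ φ : X ≃g X, h (φ u) = ∑ φ : X ≃g X, h (φ v) := by
    intro h u v
    obtain ⟨ψ, hψ⟩ := hvt u v
    let e : (X ≃g X) ≃ (X ≃g X) :=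
      { toFun := fun φ => ψ.trans φ
        invFun := fun φ => ψ.symm.trans φ
        left_inv := fun φ => RelIso.ext fun x => by simp
        right_inv := fun φ => RelIso.ext fun x => by simp }
    calc ∑ φ : X ≃g X, h (φ u)
        = ∑ φ : X ≃g X, h ((e φ) u) := Equiv.sum_comp e (fun φ : X ≃g X => h (φ u)) |>.symm
      _ = ∑ φ : X ≃g X, h (φ v) := by
          refine Finset.sum_congr rfl fun φ _ => ?_
          have : (e φ) u = φ v := by simp [e, RelIso.trans_apply, hψ]
          rw [this]
  have hφsum : ∀ (f : γ → ℝ) (φ : X ≃g X), ∑ a, f (φ a) = ∑ a, f a :=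
    fun f φ => Equiv.sum_comp φ.toEquiv f
  -- trace of B
  have htrB : ∀ u, n * B u u = 1 := by
    intro u
    have h1 : ∑ v : γ, B v v = 1 := by
      calc ∑ v, B v v = ∑ v, k⁻¹ * ∑ φ : X ≃g X, M (φ v) (φ v) :=
            Finset.sum_congr rfl fun v _ => hBapp v v
        _ = k⁻¹ * ∑ φ : X ≃g X, ∑ v, M (φ v) (φ v) := by
            rw [← Finset.mul_sum, Finset.sum_comm]
        _ = k⁻¹ * ∑ φ : X ≃g X, (1 : ℝ) := by
            congr 1
            refine Finset.sum_congr rfl fun φ _ => ?_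
            rw [hφsum (fun a => M a a) φ]
            simpa [Matrix.trace, Matrix.diag] using htr
        _ = 1 := by
            simp [hk]
    calc n * B u u = ∑ v : γ, B u u := by
          rw [Finset.sum_const, nsmul_eq_mul, Finset.card_univ]
      _ = ∑ v, B v v := by
          refine Finset.sum_congr rfl fun v _ => ?_
          rw [hBapp, hBapp]
          exact congrArg _ (const (fun a => M a a) u v)
      _ = 1 := h1
  -- row sums of B
  have hrowB : ∀ u, n * (∑ b, B u b) = r := by
    intro u
    have hrow1 : ∀ w, ∑ b, B w b = k⁻¹ * ∑ φ : X ≃g X, ∑ b, M (φ w) b := by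
      intro w
      calc ∑ b, B w b = ∑ b, k⁻¹ * ∑ φ : X ≃g X, M (φ w) (φ b) :=
            Finset.sum_congr rfl fun b _ => hBapp w b
        _ = k⁻¹ * ∑ φ : X ≃g X, ∑ b, M (φ w) (φ b) := by
            rw [← Finset.mul_sum, Finset.sum_comm]
        _ = k⁻¹ * ∑ φ : X ≃g X, ∑ b, M (φ w) b := by
            congr 1
            exact Finset.sum_congr rfl fun φ _ => hφsum (fun b => M (φ w) b) φ
    have hconst : ∀ v, ∑ b, B u b = ∑ b, B v b := by
      intro v
      rw [hrow1, hrow1]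
      exact congrArg _ (const (fun a => ∑ b, M a b) u v)
    calc n * (∑ b, B u b) = ∑ v : γ, ∑ b, B u b := by
          rw [Finset.sum_const, nsmul_eq_mul, Finset.card_univ]
      _ = ∑ v, ∑ b, B v b := Finset.sum_congr rfl fun v _ => hconst v
      _ = ∑ v, k⁻¹ * ∑ φ : X ≃g X, ∑ b, M (φ v) b :=
            Finset.sum_congr rfl fun v _ => hrow1 v
      _ = k⁻¹ * ∑ φ : X ≃g X, ∑ v, ∑ b, M (φ v) b := by
            rw [← Finset.mul_sum, Finset.sum_comm]
      _ = k⁻¹ * ∑ φ : X ≃g X, (r : ℝ) := by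
            congr 1
            refine Finset.sum_congr rfl fun φ _ => ?_
            rw [hφsum (fun a => ∑ b, M a b) φ, hr]
      _ = r := by
            rw [Finset.sum_const, nsmul_eq_mul, Finset.card_univ, ← hk, ← mul_assoc,
              inv_mul_cancel₀ hkpos.ne', one_mul]
  -- edge zeros for B
  have hedgeB : ∀ z z', X.Adj z z' → B z z' = 0 := by
    intro z z' h
    rw [hBapp]
    have hz : ∀ φ : X ≃g X, M (φ z) (φ z') = 0 :=
      fun φ => hedge _ _ (φ.map_adj_iff.mpr h)
    simp [hz]
  set Jm : Matrix γ γ ℝ := Matrix.of (fun _ _ => (1:ℝ)) with hJm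
  have hBJ : B * Jm = (r/n) • Jm := by
    ext a b
    simp only [mul_apply, hJm, of_apply, Matrix.smul_apply, smul_eq_mul, mul_one]
    rw [eq_div_iff hnpos.ne']
    linarith [hrowB a]
  have hJB : Jm * B = (r/n) • Jm := by
    ext a b
    simp only [mul_apply, hJm, of_apply, Matrix.smul_apply, smul_eq_mul, mul_one, one_mul]
    rw [eq_div_iff hnpos.ne']
    have : ∑ j, B j b = ∑ j, B b j := Finset.sum_congr rfl fun j _ => hsymm j b
    rw [this]
    linarith [hrowB b]
  have hJJ : Jm * Jm = n • Jm := by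
    ext a b
    simp only [mul_apply, hJm, of_apply, Matrix.smul_apply, smul_eq_mul, mul_one, one_mul]
    rw [Finset.sum_const, nsmul_eq_mul, Finset.card_univ, mul_one]
  set c : ℝ := n⁻¹ * (r / n) with hc
  set P : Matrix γ γ ℝ := (1 : Matrix γ γ ℝ) - n⁻¹ • Jm with hP
  have hPsymm : Pᴴ = P := by
    ext a b
    simp only [hP, conjTranspose_apply, Matrix.sub_apply, one_apply, Matrix.smul_apply, hJm, of_apply,
      star_trivial, smul_eq_mul, mul_one]
    rw [eq_comm (a := a) (b := b)]
  have hBP : B * P = B - c • Jm := by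
    rw [hP, Matrix.mul_sub, Matrix.mul_one, Matrix.mul_smul, hBJ, smul_smul, hc]
  have hJBc : Jm * (B - c • Jm) = 0 := by
    rw [Matrix.mul_sub, hJB, Matrix.mul_smul, hJJ, smul_smul]
    have hcn : c * n = r / n := by rw [hc]; field_simp
    rw [hcn, sub_self]
  have hPBP : P * B * P = B - c • Jm := by
    rw [Matrix.mul_assoc, hBP, hP, Matrix.sub_mul, Matrix.one_mul, Matrix.smul_mul,
      hJBc, smul_zero, sub_zero]
  have hBcJ : (B - c • Jm).PosSemidef := by
    rw [← hPBP]
    have h := Matrix.PosSemidef.conjTranspose_mul_mul_same hpsd P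
    rw [hPsymm] at h
    exact h
  have hcoef : 0 ≤ n^2/r := div_nonneg (sq_nonneg n) hrpos.le
  clear_value B Jm c P
  refine ⟨(n^2/r) • B, ⟨psd_smul hcoef hpsd, fun i j => ?_⟩, fun z => ?_, fun z z' h => ?_, ?_⟩
  · rw [Matrix.smul_apply, smul_eq_mul]
    exact mul_nonneg hcoef (hnonneg i j)
  · have h := htrB z
    simp only [Matrix.smul_apply, smul_eq_mul]
    have hb : B z z = n⁻¹ := by
      field_simp
      linarith
    rw [hb]
    field_simp [hnpos.ne']
  · simp [Matrix.smul_apply, hedgeB z z' h]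
  · have hNJ : (n^2/r) • B - Jm = (n^2/r) • (B - c • Jm) := by
      rw [smul_sub, smul_smul]
      have h1 : n^2/r * c = 1 := by rw [hc]; field_simp
      rw [h1, one_smul]
    rw [hNJ]
    exact psd_smul hcoef hBcJ


end Stmt8Aux

open Stmt8Aux in
theorem stmt_8 {γ : Type*} [Fintype γ] [Nonempty γ] (X : SimpleGraph γ) :
    (Fintype.card γ : ℝ) ≤ thetaMinus X * thetaBarPlus X ∧
    ((∀ u v : γ, ∃ φ : X ≃g X, φ u = v) →
      thetaMinus X * thetaBarPlus X = (Fintype.card γ : ℝ)) := by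
  classical
  set n : ℝ := (Fintype.card γ : ℝ) with hn
  have hnpos : 0 < n := by rw [hn]; exact Nat.cast_pos.mpr Fintype.card_pos
  set S1 : Set ℝ := {r : ℝ | ∃ M : Matrix γ γ ℝ, IsDNN M ∧ M.trace = 1 ∧
    (∀ z z', X.Adj z z' → M z z' = 0) ∧ r = ∑ z, ∑ z', M z z'} with hS1
  set S2 : Set ℝ := {t : ℝ | ∃ N : Matrix γ γ ℝ, IsDNN N ∧ (∀ z, N z z = t) ∧
    (∀ z z', X.Adj z z' → N z z' = 0) ∧
    (N - Matrix.of fun _ _ => (1 : ℝ)).PosSemidef} with hS2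
  have hθm : thetaMinus X = sSup S1 := rfl
  have hθp : thetaBarPlus X = sInf S2 := rfl
  -- `1` is feasible for `S1`
  have h1S1 : (1:ℝ) ∈ S1 := by
    refine ⟨(n⁻¹ : ℝ) • (1 : Matrix γ γ ℝ),
      ⟨psd_smul (inv_nonneg.mpr hnpos.le) Matrix.PosSemidef.one, ?_⟩, ?_, ?_, ?_⟩
    · intro i j
      rw [Matrix.smul_apply, smul_eq_mul]
      refine mul_nonneg (inv_nonneg.mpr hnpos.le) ?_
      by_cases h : i = j <;> simp [Matrix.one_apply, h]
    · rw [Matrix.trace_smul, Matrix.trace_one, smul_eq_mul]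
      rw [show ((Fintype.card γ : ℝ)) = n from hn.symm]
      exact inv_mul_cancel₀ hnpos.ne'
    · intro z z' h
      rw [Matrix.smul_apply, Matrix.one_apply_ne h.ne, smul_zero]
    · have hrow : ∀ z : γ, ∑ z', ((n⁻¹ : ℝ) • (1 : Matrix γ γ ℝ)) z z' = n⁻¹ := by
        intro z
        simp [Matrix.smul_apply, Matrix.one_apply]
      rw [Finset.sum_congr rfl (fun z _ => hrow z), Finset.sum_const, nsmul_eq_mul,
        Finset.card_univ, show ((Fintype.card γ : ℝ)) = n from hn.symm]
      exact (mul_inv_cancel₀ hnpos.ne').symm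
  -- upper bound on `S1`
  have hS1le : ∀ r ∈ S1, r ≤ n := by
    rintro r ⟨M, hdnn, htr, -, hr⟩
    have htr' : ∑ z : γ, M z z = 1 := by simpa [Matrix.trace, Matrix.diag] using htr
    have hswap : ∑ z, ∑ z', M z' z = r := by rw [hr]; apply Finset.sum_comm
    have hle : ∑ z : γ, ∑ z' : γ, (M z z' + M z' z) ≤ ∑ z : γ, ∑ z' : γ, (M z z + M z' z') :=
      Finset.sum_le_sum fun z _ => Finset.sum_le_sum fun z' _ => psd_pair hdnn.1 z z'
    have hL : ∑ z : γ, ∑ z' : γ, (M z z' + M z' z) = r + r := by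
      simp only [Finset.sum_add_distrib]
      rw [hswap, ← hr]
    have hR : ∑ z : γ, ∑ z' : γ, (M z z + M z' z') = n + n := by
      have hin : ∀ z : γ, ∑ z' : γ, (M z z + M z' z') = n * M z z + 1 := by
        intro z
        rw [Finset.sum_add_distrib, Finset.sum_const, nsmul_eq_mul, Finset.card_univ, htr',
          show ((Fintype.card γ : ℝ)) = n from hn.symm]
      rw [Finset.sum_congr rfl fun z _ => hin z, Finset.sum_add_distrib, ← Finset.mul_sum, htr',
        Finset.sum_const, nsmul_eq_mul, Finset.card_univ, mul_one]
    rw [hL, hR] at hle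
    linarith
  have hbddS1 : BddAbove S1 := ⟨n, fun r hr => hS1le r hr⟩
  -- lower bound on `S1`
  have hS1ge1 : ∀ r ∈ S1, 1 ≤ r := by
    rintro r ⟨M, hdnn, htr, -, hr⟩
    have htr' : ∑ z : γ, M z z = 1 := by simpa [Matrix.trace, Matrix.diag] using htr
    rw [hr, ← htr']
    exact Finset.sum_le_sum fun z _ =>
      Finset.single_le_sum (fun z' _ => hdnn.2 z z') (Finset.mem_univ z)
  -- `n` is feasible for `S2`
  have hnS2 : n ∈ S2 := by
    refine ⟨n • (1 : Matrix γ γ ℝ), ⟨psd_smul hnpos.le Matrix.PosSemidef.one, ?_⟩, ?_, ?_, ?_⟩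
    · intro i j
      rw [Matrix.smul_apply, smul_eq_mul]
      exact mul_nonneg hnpos.le (by by_cases h : i = j <;> simp [Matrix.one_apply, h])
    · intro z
      simp [Matrix.smul_apply, Matrix.one_apply]
    · intro z z' h
      rw [Matrix.smul_apply, Matrix.one_apply_ne h.ne, smul_zero]
    · rw [hn]
      exact nI_sub_J_psd
  have hS2ge1 : ∀ t ∈ S2, 1 ≤ t := by
    rintro t ⟨N, -, hdiag, -, hpsd⟩
    obtain ⟨z⟩ := ‹Nonempty γ›
    have h := psd_diag_nonneg hpsd z
    simp only [Matrix.sub_apply, Matrix.of_apply, hdiag z] at h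
    linarith
  have hbddS2 : BddBelow S2 := ⟨1, fun t ht => hS2ge1 t ht⟩
  have hS2ne : S2.Nonempty := ⟨n, hnS2⟩
  -- key inequality: every `t ∈ S2` yields a good element of `S1`
  have key1 : ∀ t ∈ S2, n / t ≤ sSup S1 := by
    intro t ht
    obtain ⟨N, hdnn, hdiag, hedge, hpsd⟩ := ht
    have ht1 : 1 ≤ t := hS2ge1 t ⟨N, hdnn, hdiag, hedge, hpsd⟩
    have htpos : 0 < t := by linarith
    have hsumN : n^2 ≤ ∑ z, ∑ z', N z z' := by
      have h := hpsd.dotProduct_mulVec_nonneg (fun _ => (1:ℝ))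
      have hexp : (star (fun _ => (1:ℝ))) ⬝ᵥ
          ((N - Matrix.of fun _ _ => (1:ℝ)) *ᵥ (fun _ => (1:ℝ)))
          = (∑ z, ∑ z', N z z') - n^2 := by
        simp only [star_trivial, dotProduct, mulVec, Matrix.sub_apply, Matrix.of_apply,
          one_mul, mul_one, Finset.sum_sub_distrib, Finset.sum_const, nsmul_eq_mul,
          Finset.card_univ]
        ring
      rw [hexp] at h
      linarith
    set c : ℝ := (n * t)⁻¹ with hc
    have hcpos : 0 < c := inv_pos.mpr (mul_pos hnpos htpos)
    have hmem : (c * ∑ z, ∑ z', N z z') ∈ S1 := by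
      refine ⟨c • N, ⟨psd_smul hcpos.le hdnn.1, fun i j => ?_⟩, ?_, ?_, ?_⟩
      · rw [Matrix.smul_apply, smul_eq_mul]
        exact mul_nonneg hcpos.le (hdnn.2 i j)
      · rw [Matrix.trace_smul, smul_eq_mul]
        have htrN : N.trace = n * t := by
          simp only [Matrix.trace, Matrix.diag]
          rw [Finset.sum_congr rfl fun z _ => hdiag z, Finset.sum_const, nsmul_eq_mul,
            Finset.card_univ, show ((Fintype.card γ : ℝ)) = n from hn.symm]
        rw [htrN, hc]
        exact inv_mul_cancel₀ (mul_pos hnpos htpos).ne'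
      · intro z z' h
        rw [Matrix.smul_apply, hedge z z' h, smul_zero]
      · simp [Matrix.smul_apply, Finset.mul_sum, smul_eq_mul]
    have hle : n / t ≤ c * ∑ z, ∑ z', N z z' := by
      calc n/t = c * n^2 := by rw [hc]; field_simp
        _ ≤ c * ∑ z, ∑ z', N z z' := mul_le_mul_of_nonneg_left hsumN hcpos.le
    exact hle.trans (le_csSup hbddS1 hmem)
  have hθmge1 : 1 ≤ sSup S1 := le_csSup hbddS1 h1S1
  have hθmpos : 0 < sSup S1 := lt_of_lt_of_le one_pos hθmge1
  -- the main inequality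
  have hmain : n ≤ sSup S1 * sInf S2 := by
    have hinf_lb : n / sSup S1 ≤ sInf S2 := by
      refine le_csInf hS2ne fun t ht => ?_
      have h1 := key1 t ht
      have htpos : 0 < t := lt_of_lt_of_le one_pos (hS2ge1 t ht)
      rw [div_le_iff₀ htpos] at h1
      rw [div_le_iff₀ hθmpos]
      linarith
    have h2 := (div_le_iff₀ hθmpos).mp hinf_lb
    calc n ≤ sInf S2 * sSup S1 := h2
      _ = sSup S1 * sInf S2 := mul_comm _ _
  constructor
  · rw [hθm, hθp]
    exact hmain
  · intro hvt
    have hθpge1 : 1 ≤ sInf S2 := le_csInf hS2ne hS2ge1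
    have hθppos : 0 < sInf S2 := lt_of_lt_of_le one_pos hθpge1
    have key2 : ∀ r ∈ S1, r * sInf S2 ≤ n := by
      intro r hrS1
      obtain ⟨M, hdnn, htr, hedge, hr⟩ := hrS1
      have hr1 : 1 ≤ r := hS1ge1 r ⟨M, hdnn, htr, hedge, hr⟩
      have hrpos : 0 < r := by linarith
      obtain ⟨N, hN1, hN2, hN3, hN4⟩ := avg_mem X hvt hdnn htr hedge hr hrpos
      have hmem2 : n / r ∈ S2 := by
        refine ⟨N, hN1, fun z => ?_, hN3, hN4⟩
        rw [hN2 z, show ((Fintype.card γ : ℝ)) = n from hn.symm]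
      have hinfle := csInf_le hbddS2 hmem2
      rw [le_div_iff₀ hrpos] at hinfle
      linarith
    have hsup_le : sSup S1 ≤ n / sInf S2 := by
      refine csSup_le ⟨1, h1S1⟩ fun r hr => ?_
      have h := key2 r hr
      rw [le_div_iff₀ hθppos]
      linarith
    rw [le_div_iff₀ hθppos] at hsup_le
    rw [hθm, hθp]
    linarith
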